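/- Let σ be an automorphism of F_{q^m}, δ = 0, and define the operator D_a(b) = σ(b)·a for a, b ∈ F_{q^m}, with powers D_a^i(b) defined by iteration. Let a_1, ..., a_ℓ ∈ F_{q^m} be representatives of pairwise distinct nontrivial (σ,0)-conjugacy classes, and for each i let x^{(i)} = (x^{(i)}_1, ..., x^{(i)}_{n_i}) ∈ F_{q^m}^{n_i} consist of F_q-linearly independent elements. Then the generalized Moore matrix whose i-th block has rows (D_{a_i}^r(x^{(i)}_1), ..., D_{a_i}^r(x^{(i)}_{n_i})) for r = 0, ..., d−1 has F_{q^m}-rank equal to min(d, n_1 + ... + n_ℓ). -/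

import Mathlib

set_option maxHeartbeats 1000000


/-- Iterated generalized operator `D_a^r(b)` for zero derivation: `D_a(b) = σ(b)·a`. -/
def Dit {F : Type*} [Field F] (σ : F ≃+* F) (a b : F) : ℕ → F
  | 0 => b
  | r + 1 => σ (Dit σ a b r) * a

namespace Stmt6

open Finset Module LinearMap

variable {F : Type*} [Field F] (σ : F ≃+* F)

lemma pow_apply_succ (r : ℕ) (x : F) : (σ ^ (r + 1)) x = σ ((σ ^ r) x) := by
  rw [pow_succ']; rfl

lemma pow_apply_succ' (r : ℕ) (x : F) : (σ ^ (r + 1)) x = (σ ^ r) (σ x) := by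
  rw [pow_succ]; rfl

@[simp] lemma one_apply_eq (x : F) : (1 : F ≃+* F) x = x := rfl

@[simp] lemma pow_apply_zero (x : F) : (σ ^ 0) x = x := by rw [pow_zero]; rfl

/-- Truncated norm `N_r(b) = σ^{r-1}(b) ⋯ σ(b) b`. -/
def Nrm (b : F) (r : ℕ) : F := ∏ s ∈ Finset.range r, (σ ^ s) b

lemma Nrm_zero (b : F) : Nrm σ b 0 = 1 := by simp [Nrm]

lemma Nrm_succ (b : F) (r : ℕ) : Nrm σ b (r + 1) = (σ ^ r) b * Nrm σ b r := by
  rw [Nrm, Finset.prod_range_succ, mul_comm]; rfl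

lemma Nrm_succ' (b : F) (r : ℕ) : Nrm σ b (r + 1) = σ (Nrm σ b r) * b := by
  induction r with
  | zero => simp [Nrm]
  | succ r ih =>
    calc Nrm σ b (r + 2) = (σ ^ (r + 1)) b * Nrm σ b (r + 1) := Nrm_succ _ _ _
      _ = (σ ^ (r + 1)) b * (σ (Nrm σ b r) * b) := by rw [ih]
      _ = σ ((σ ^ r) b * Nrm σ b r) * b := by rw [map_mul, ← pow_apply_succ]; ring
      _ = σ (Nrm σ b (r + 1)) * b := by rw [← Nrm_succ]

lemma Dit_eq (a b : F) (r : ℕ) : Dit σ a b r = (σ ^ r) b * Nrm σ a r := by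
  induction r with
  | zero => simp [Dit, Nrm]

  | succ r ih =>
    show σ (Dit σ a b r) * a = _
    rw [ih, map_mul, Nrm_succ', ← pow_apply_succ]
    ring

lemma Nrm_mul (u v : F) (r : ℕ) : Nrm σ (u * v) r = Nrm σ u r * Nrm σ v r := by
  simp [Nrm, map_mul, Finset.prod_mul_distrib]

lemma Nrm_sig_div (y : F) (hy : y ≠ 0) (r : ℕ) :
    Nrm σ (σ y / y) r = (σ ^ r) y / y := by
  induction r with
  | zero => simp [Nrm, div_self hy]
  | succ r ih =>
    have h1 : (σ ^ r) y ≠ 0 := (map_ne_zero (σ ^ r)).mpr hy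
    rw [Nrm_succ, ih, map_div₀, ← pow_apply_succ']
    field_simp

/-- The fixed subfield of `σ`. -/
def Kfix : Subfield F where
  carrier := {u : F | σ u = u}
  mul_mem' := fun {a b} ha hb => by simp only [Set.mem_setOf_eq, map_mul] at *; rw [ha, hb]
  one_mem' := map_one σ
  add_mem' := fun {a b} ha hb => by simp only [Set.mem_setOf_eq, map_add] at *; rw [ha, hb]
  zero_mem' := map_zero σ
  neg_mem' := fun {a} ha => by simp only [Set.mem_setOf_eq, map_neg] at *; rw [ha]
  inv_mem' := fun a ha => by simp only [Set.mem_setOf_eq, map_inv₀] at *; rw [ha]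

lemma mem_Kfix {u : F} : u ∈ Kfix σ ↔ σ u = u := Iff.rfl

lemma pow_fixed {u : F} (hu : σ u = u) (r : ℕ) : (σ ^ r) u = u := by
  induction r with
  | zero => rfl
  | succ r ih => rw [pow_apply_succ, ih, hu]

/-- The `Kfix σ`-linear operator `x ↦ ∑_{r<k} c_r N_r(α) σ^r(x)`. -/
def Lop (c : ℕ → F) (k : ℕ) (α : F) : F →ₗ[Kfix σ] F where
  toFun x := ∑ r ∈ range k, c r * Nrm σ α r * (σ ^ r) x
  map_add' u v := by
    simp only [map_add, mul_add]
    rw [Finset.sum_add_distrib]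
  map_smul' m u := by
    simp only [RingHom.id_apply]
    have h : ∀ r : ℕ, (σ ^ r) (m • u) = (m : F) * (σ ^ r) u := by
      intro r
      show (σ ^ r) ((m : F) * u) = _
      rw [map_mul, pow_fixed σ m.2]
    show ∑ r ∈ range k, c r * Nrm σ α r * (σ ^ r) (m • u)
        = (m : F) * ∑ r ∈ range k, c r * Nrm σ α r * (σ ^ r) u
    rw [Finset.mul_sum]
    exact Finset.sum_congr rfl fun r _ => by rw [h r]; ring

lemma Lop_apply (c : ℕ → F) (k : ℕ) (α x : F) :
    Lop σ c k α x = ∑ r ∈ range k, c r * Nrm σ α r * (σ ^ r) x := rfl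

/-- The `Kfix σ`-linear map `x ↦ σ(x)·α − b·x`. -/
def phi (b α : F) : F →ₗ[Kfix σ] F where
  toFun x := σ x * α - b * x
  map_add' u v := by
    show σ (u + v) * α - b * (u + v) = (σ u * α - b * u) + (σ v * α - b * v)
    rw [map_add]; ring
  map_smul' m u := by
    simp only [RingHom.id_apply]
    show σ ((m : F) * u) * α - b * ((m : F) * u) = (m : F) * (σ u * α - b * u)
    rw [map_mul, m.2]
    ring

/-- The auxiliary coefficients of the right quotient by `t - b`. -/
def gg (c : ℕ → F) (k : ℕ) (b : F) (s : ℕ) : F :=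
  ∑ u ∈ Finset.Ico s (k + 1), c u * ∏ t ∈ Finset.Ico s u, (σ ^ t) b

lemma gg_rec (c : ℕ → F) (k : ℕ) (b : F) {s : ℕ} (hs : s ≤ k) :
    gg σ c k b s = c s + (σ ^ s) b * gg σ c k b (s + 1) := by
  have h1 : s < k + 1 := by omega
  rw [gg, Finset.sum_eq_sum_Ico_succ_bot h1]
  congr 1
  · simp
  · rw [gg, Finset.mul_sum]
    refine Finset.sum_congr rfl fun u hu => ?_
    have h2 : s < u := by have := (Finset.mem_Ico.1 hu).1; omega
    rw [Finset.prod_eq_prod_Ico_succ_bot h2]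
    ring

lemma gg_top (c : ℕ → F) (k : ℕ) (b : F) : gg σ c k b (k + 1) = 0 := by
  simp [gg]

lemma gg_zero (c : ℕ → F) (k : ℕ) (b : F)
    (hb : ∑ u ∈ range (k + 1), c u * Nrm σ b u = 0) : gg σ c k b 0 = 0 := by
  rw [gg, ← Finset.range_eq_Ico, ← hb]
  exact Finset.sum_congr rfl fun u _ => by rw [Nrm, Finset.range_eq_Ico]

lemma Lop_factor (c : ℕ → F) (k : ℕ) (b α : F)
    (hb : ∑ u ∈ range (k + 1), c u * Nrm σ b u = 0) (x : F) :
    Lop σ c (k + 1) α x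
      = Lop σ (fun s => gg σ c k b (s + 1)) k α (σ x * α - b * x) := by
  rw [Lop_apply, Lop_apply]
  have expand : ∀ s ∈ range k,
      gg σ c k b (s + 1) * Nrm σ α s * (σ ^ s) (σ x * α - b * x)
        = (gg σ c k b (s + 1) * Nrm σ α (s + 1) * (σ ^ (s + 1)) x
            - gg σ c k b s * Nrm σ α s * (σ ^ s) x)
          + c s * Nrm σ α s * (σ ^ s) x := by
    intro s hs
    have hsk : s ≤ k := by have := Finset.mem_range.1 hs; omega
    rw [map_sub, map_mul, map_mul, ← pow_apply_succ', Nrm_succ, gg_rec σ c k b hsk]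
    ring
  rw [Finset.sum_congr rfl expand, Finset.sum_add_distrib,
    Finset.sum_range_sub (fun s => gg σ c k b s * Nrm σ α s * (σ ^ s) x),
    gg_zero σ c k b hb, gg_rec σ c k b (le_refl k), gg_top,
    Finset.sum_range_succ]
  ring

section Key

variable [Fintype F]

lemma finrank_ker_comp {K V : Type*} [Field K] [AddCommGroup V] [Module K V]
    [FiniteDimensional K V] (f g : V →ₗ[K] V) :
    finrank K (LinearMap.ker (f ∘ₗ g)) ≤
      finrank K (LinearMap.ker g) + finrank K (LinearMap.ker f) := by
  have hmap : ∀ x ∈ LinearMap.ker (f ∘ₗ g), g x ∈ LinearMap.ker f := by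
    intro x hx
    simpa [LinearMap.mem_ker] using hx
  set h := g.restrict hmap with hh
  have h1 : finrank K (LinearMap.range h) + finrank K (LinearMap.ker h)
      = finrank K (LinearMap.ker (f ∘ₗ g)) := LinearMap.finrank_range_add_finrank_ker h
  have h2 : finrank K (LinearMap.range h) ≤ finrank K (LinearMap.ker f) :=
    (LinearMap.range h).finrank_le
  have h3 : finrank K (LinearMap.ker h) ≤ finrank K (LinearMap.ker g) := by
    have hle : (LinearMap.ker h).map (LinearMap.ker (f ∘ₗ g)).subtype ≤ LinearMap.ker g := by
      intro x hx
      rw [Submodule.mem_map] at hx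
      obtain ⟨z, hz, rfl⟩ := hx
      have hz' : h z = 0 := hz
      show g ((z : ↥(LinearMap.ker (f ∘ₗ g))) : V) = 0
      exact Subtype.ext_iff.mp hz'
    calc finrank K (LinearMap.ker h)
        = finrank K ((LinearMap.ker h).map (LinearMap.ker (f ∘ₗ g)).subtype) :=
          LinearEquiv.finrank_eq (Submodule.equivSubtypeMap _ _)
      _ ≤ finrank K (LinearMap.ker g) := Submodule.finrank_mono hle
  omega

variable {ℓ : ℕ} {a : Fin ℓ → F}

lemma ker_phi_other (y : F) (hy : y ≠ 0) {i j : Fin ℓ} (hij : j ≠ i)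
    (ha0 : ∀ i, a i ≠ 0)
    (hconj : ∀ i i' : Fin ℓ, i ≠ i' → ¬ ∃ c : F, c ≠ 0 ∧ σ c * a i * c⁻¹ = a i') :
    LinearMap.ker (phi σ (σ y * a i * y⁻¹) (a j)) = ⊥ := by
  rw [LinearMap.ker_eq_bot']
  intro x hx
  by_contra hx0
  have hxv : σ x * a j - (σ y * a i * y⁻¹) * x = 0 := hx
  apply hconj j i hij
  refine ⟨x * y⁻¹, by simp [hx0, hy], ?_⟩
  have h1 : σ x * a j = σ y * a i * y⁻¹ * x := by
    rw [sub_eq_zero] at hxv; exact hxv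
  rw [map_mul, map_inv₀]
  have hσy : σ y ≠ 0 := by simpa using hy
  have hσx : σ x ≠ 0 := by simpa using hx0
  field_simp at h1 ⊢
  linear_combination h1

lemma ker_phi_same (y α : F) (hy : y ≠ 0) (hα : α ≠ 0) :
    LinearMap.ker (phi σ (σ y * α * y⁻¹) α) = Submodule.span (Kfix σ) {y} := by
  ext v
  rw [LinearMap.mem_ker, Submodule.mem_span_singleton]
  constructor
  · intro h
    have h1 : σ v * α - σ y * α * y⁻¹ * v = 0 := h
    rw [sub_eq_zero] at h1
    have hσy : σ y ≠ 0 := by simpa using hy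
    have h2 : σ v * y = σ y * v := by
      apply mul_left_cancel₀ hα
      field_simp at h1
      linear_combination α * h1
    refine ⟨⟨v * y⁻¹, ?_⟩, ?_⟩
    · show σ (v * y⁻¹) = v * y⁻¹
      rw [map_mul, map_inv₀]
      field_simp
      linear_combination h2
    · show v * y⁻¹ * y = v
      field_simp
  · rintro ⟨k, rfl⟩
    show σ ((k : F) * y) * α - σ y * α * y⁻¹ * ((k : F) * y) = 0
    rw [map_mul, k.2]
    field_simp
    ring

lemma key {ℓ : ℕ} {a : Fin ℓ → F} (ha0 : ∀ i, a i ≠ 0)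
    (hconj : ∀ i i' : Fin ℓ, i ≠ i' → ¬ ∃ c : F, c ≠ 0 ∧ σ c * a i * c⁻¹ = a i') :
    ∀ (k : ℕ) (c : ℕ → F), (∃ r ∈ range k, c r ≠ 0) →
      ∑ i, finrank (Kfix σ) (LinearMap.ker (Lop σ c k (a i))) ≤ k - 1 := by
  intro k
  induction k with
  | zero => rintro c ⟨r, hr, -⟩; simp at hr
  | succ k ih =>
    intro c hc
    by_cases hall : ∀ i, LinearMap.ker (Lop σ c (k + 1) (a i)) = ⊥
    · have hz : ∑ i, finrank (Kfix σ) (LinearMap.ker (Lop σ c (k + 1) (a i))) = 0 :=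
        Finset.sum_eq_zero fun i _ => by rw [hall i]; exact finrank_bot _ _
      omega
    · push_neg at hall
      obtain ⟨i, hi⟩ := hall
      obtain ⟨y, hyk, hy0⟩ := Submodule.exists_mem_ne_zero_of_ne_bot hi
      have hyker : ∑ r ∈ range (k + 1), c r * Nrm σ (a i) r * (σ ^ r) y = 0 :=
        LinearMap.mem_ker.mp hyk
      set b : F := σ y * a i * y⁻¹ with hbdef
      have hbfac : b = (σ y / y) * a i := by rw [hbdef]; ring
      have hNb : ∀ u : ℕ, Nrm σ b u = (σ ^ u) y / y * Nrm σ (a i) u := by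
        intro u; rw [hbfac, Nrm_mul, Nrm_sig_div σ y hy0]
      have hb0 : ∑ u ∈ range (k + 1), c u * Nrm σ b u = 0 := by
        have hrw : ∑ u ∈ range (k + 1), c u * Nrm σ b u
            = y⁻¹ * ∑ u ∈ range (k + 1), c u * Nrm σ (a i) u * (σ ^ u) y := by
          rw [Finset.mul_sum]
          refine Finset.sum_congr rfl fun u _ => ?_
          rw [hNb u]
          field_simp
        rw [hrw, hyker, mul_zero]
      set g : ℕ → F := fun s => gg σ c k b (s + 1) with hgdef
      have hfac : ∀ j, Lop σ c (k + 1) (a j) = (Lop σ g k (a j)) ∘ₗ (phi σ b (a j)) := by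
        intro j
        ext v
        exact Lop_factor σ c k b (a j) hb0 v
      have hgg0 : gg σ c k b 0 = 0 := gg_zero σ c k b hb0
      have hgne : ∃ s ∈ range k, g s ≠ 0 := by
        by_contra hno
        push_neg at hno
        obtain ⟨r, hr, hcr⟩ := hc
        refine hcr ?_
        have hggz : ∀ s, s ≤ k + 1 → gg σ c k b s = 0 := by
          intro s hs
          rcases Nat.eq_or_lt_of_le hs with h | h
          · rw [h]; exact gg_top σ c k b
          · rcases s with _ | s
            · exact hgg0
            · exact hno s (Finset.mem_range.2 (by omega))
        have hrk : r ≤ k := by have := Finset.mem_range.1 hr; omega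
        have hrec := gg_rec σ c k b hrk
        rw [hggz r (by omega), hggz (r + 1) (by omega)] at hrec
        simpa using hrec.symm
      obtain ⟨s0, hs0, hs0ne⟩ := hgne
      have hk1 : 1 ≤ k := by have := Finset.mem_range.1 hs0; omega
      have hxle : ∀ j, finrank (Kfix σ) (LinearMap.ker (Lop σ c (k + 1) (a j)))
          ≤ finrank (Kfix σ) (LinearMap.ker (phi σ b (a j)))
            + finrank (Kfix σ) (LinearMap.ker (Lop σ g k (a j))) := by
        intro j
        rw [hfac j]
        exact finrank_ker_comp _ _
      have hphis : ∑ j, finrank (Kfix σ) (LinearMap.ker (phi σ b (a j))) = 1 := by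
        have h0 : ∀ j ∈ Finset.univ, j ≠ i →
            finrank (Kfix σ) (LinearMap.ker (phi σ b (a j))) = 0 := by
          intro j _ hji
          rw [hbdef, ker_phi_other σ y hy0 hji ha0 hconj, finrank_bot]
        rw [Finset.sum_eq_single_of_mem i (Finset.mem_univ i) h0, hbdef,
          ker_phi_same σ y (a i) hy0 (ha0 i), finrank_span_singleton hy0]
      have hih := ih g ⟨s0, hs0, hs0ne⟩
      calc ∑ j, finrank (Kfix σ) (LinearMap.ker (Lop σ c (k + 1) (a j)))
          ≤ ∑ j, (finrank (Kfix σ) (LinearMap.ker (phi σ b (a j)))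
              + finrank (Kfix σ) (LinearMap.ker (Lop σ g k (a j)))) :=
            Finset.sum_le_sum fun j _ => hxle j
        _ = 1 + ∑ j, finrank (Kfix σ) (LinearMap.ker (Lop σ g k (a j))) := by
            rw [Finset.sum_add_distrib, hphis]
        _ ≤ (k + 1) - 1 := by omega

lemma rows_li {ℓ d : ℕ} {nv : Fin ℓ → ℕ} {a : Fin ℓ → F}
    (ha0 : ∀ i, a i ≠ 0)
    (hconj : ∀ i i' : Fin ℓ, i ≠ i' → ¬ ∃ c : F, c ≠ 0 ∧ σ c * a i * c⁻¹ = a i')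
    (x : ∀ i : Fin ℓ, Fin (nv i) → F)
    (hx : ∀ i (c : Fin (nv i) → F), (∀ j, σ (c j) = c j) →
      (∑ j, c j * x i j) = 0 → ∀ j, c j = 0)
    (hd : d ≤ ∑ i, nv i) :
    LinearIndependent F (fun (r : Fin d) (col : (i : Fin ℓ) × Fin (nv i)) =>
      Dit σ (a col.1) (x col.1 col.2) r.1) := by
  rw [Fintype.linearIndependent_iff]
  intro c hc
  by_contra hne
  push_neg at hne
  obtain ⟨r0, hr0⟩ := hne
  set c' : ℕ → F := fun r => if h : r < d then c ⟨r, h⟩ else 0 with hc'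
  have hex : ∃ r ∈ range d, c' r ≠ 0 := by
    refine ⟨r0.1, Finset.mem_range.2 r0.2, ?_⟩
    simpa [hc', r0.2] using hr0
  have hcol : ∀ (i : Fin ℓ) (j : Fin (nv i)), Lop σ c' d (a i) (x i j) = 0 := by
    intro i j
    have h1 := congrFun hc ⟨i, j⟩
    simp only [Finset.sum_apply, Pi.smul_apply, smul_eq_mul, Pi.zero_apply] at h1
    rw [Lop_apply,
      ← Fin.sum_univ_eq_sum_range (fun r => c' r * Nrm σ (a i) r * (σ ^ r) (x i j)) d]
    rw [← h1]
    refine Finset.sum_congr rfl fun r _ => ?_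
    rw [Dit_eq]
    simp only [hc', r.isLt, dif_pos, Fin.eta]
    ring
  have hker : ∀ i, Submodule.span (Kfix σ) (Set.range (x i))
      ≤ LinearMap.ker (Lop σ c' d (a i)) := by
    intro i
    rw [Submodule.span_le]
    rintro _ ⟨j, rfl⟩
    exact LinearMap.mem_ker.mpr (hcol i j)
  have hli : ∀ i, LinearIndependent (Kfix σ) (x i) := by
    intro i
    rw [Fintype.linearIndependent_iff]
    intro gcoef hg j
    have h1 : ∀ j', σ ((gcoef j' : F)) = (gcoef j' : F) := fun j' => (gcoef j').2
    have h2 : (∑ j', (gcoef j' : F) * x i j') = 0 := hg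
    exact Subtype.ext (hx i (fun j' => (gcoef j' : F)) h1 h2 j)
  have hcount : ∀ i, nv i ≤ finrank (Kfix σ) (LinearMap.ker (Lop σ c' d (a i))) := by
    intro i
    have h1 : finrank (Kfix σ) (Submodule.span (Kfix σ) (Set.range (x i))) = nv i := by
      rw [finrank_span_eq_card (hli i), Fintype.card_fin]
    rw [← h1]
    exact Submodule.finrank_mono (hker i)
  have hkey := key σ ha0 hconj d c' hex
  have hsum : ∑ i, nv i ≤ ∑ i, finrank (Kfix σ) (LinearMap.ker (Lop σ c' d (a i))) :=
    Finset.sum_le_sum fun i _ => hcount i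
  have hd1 : 0 < d := r0.pos
  omega

lemma rank_submatrix_le' {R : Type*} [Field R] {l m n : Type*}
    [Fintype l] [Fintype m] [Fintype n]
    (f : l → m) (A : Matrix m n R) :
    (A.submatrix f _root_.id).rank ≤ A.rank := by
  have h : A.submatrix f _root_.id = A.submatrix f (Equiv.refl n) := rfl
  rw [h, Matrix.rank, Matrix.rank, Matrix.mulVecLin_submatrix, LinearMap.range_comp,
    LinearMap.range_comp,
    show LinearMap.funLeft R R (Equiv.refl n).symm
      = (LinearEquiv.funCongrLeft R R (Equiv.refl n).symm :
          (n → R) ≃ₗ[R] (n → R)).toLinearMap from rfl,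
    LinearEquiv.range, Submodule.map_top]
  exact Submodule.finrank_map_le _ _

end Key

end Stmt6

/-- The generalized Moore matrix built from representatives of pairwise distinct
nontrivial (σ,0)-conjugacy classes and blockwise `F_q`-linearly independent entries
(`F_q` = fixed field of `σ`) has `F_{q^m}`-rank `min(d, n_1 + ... + n_ℓ)`. -/
theorem stmt_6 (F : Type*) [Field F] [Fintype F] (σ : F ≃+* F)
    (ℓ d : ℕ) (nv : Fin ℓ → ℕ) (a : Fin ℓ → F)
    (ha0 : ∀ i, a i ≠ 0)
    (hconj : ∀ i i' : Fin ℓ, i ≠ i' →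
      ¬ ∃ c : F, c ≠ 0 ∧ σ c * a i * c⁻¹ = a i')
    (x : ∀ i : Fin ℓ, Fin (nv i) → F)
    (hx : ∀ i (c : Fin (nv i) → F), (∀ j, σ (c j) = c j) →
      (∑ j, c j * x i j) = 0 → ∀ j, c j = 0) :
    (Matrix.of fun (r : Fin d) (c : (i : Fin ℓ) × Fin (nv i)) =>
        Dit σ (a c.1) (x c.1 c.2) r.1).rank = min d (∑ i, nv i) := by
  classical
  rcases le_or_gt d (∑ i, nv i) with hd | hd
  · have h := (Stmt6.rows_li σ ha0 hconj x hx hd).rank_matrix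
    rw [Fintype.card_fin] at h
    rw [min_eq_left hd]
    exact h
  · have hle : (∑ i, nv i) ≤ d := le_of_lt hd
    rw [min_eq_right hle]
    apply le_antisymm
    · have h := Matrix.rank_le_card_width
        (Matrix.of fun (r : Fin d) (c : (i : Fin ℓ) × Fin (nv i)) =>
          Dit σ (a c.1) (x c.1 c.2) r.1)
      simpa [Fintype.card_sigma] using h
    · have h1 : (Matrix.of fun (r : Fin (∑ i, nv i)) (c : (i : Fin ℓ) × Fin (nv i)) =>
          Dit σ (a c.1) (x c.1 c.2) r.1).rank = ∑ i, nv i := by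
        have h := (Stmt6.rows_li σ ha0 hconj x hx (le_refl (∑ i, nv i))).rank_matrix
        rwa [Fintype.card_fin] at h
      have hsub : (Matrix.of fun (r : Fin (∑ i, nv i)) (c : (i : Fin ℓ) × Fin (nv i)) =>
          Dit σ (a c.1) (x c.1 c.2) r.1)
          = (Matrix.of fun (r : Fin d) (c : (i : Fin ℓ) × Fin (nv i)) =>
              Dit σ (a c.1) (x c.1 c.2) r.1).submatrix (Fin.castLE hle) id := rfl
      rw [← h1, hsub]
      exact Stmt6.rank_submatrix_le' (Fin.castLE hle) _
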